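/- The semidirect product F_n ⋊ ℤ/2, where ℤ/2 acts by inverting each free generator, is isomorphic to the free product of n+1 copies of ℤ/2. -/

import Mathlib

/-- The involution `ι` of the free group inverting each generator. -/
def invAut (α : Type) : MulAut (FreeGroup α) :=
  MonoidHom.toMulEquiv
    (FreeGroup.lift fun i => (FreeGroup.of i)⁻¹)
    (FreeGroup.lift fun i => (FreeGroup.of i)⁻¹)
    (by ext i; simp) (by ext i; simp)

theorem invAut_sq (α : Type) : invAut α ^ 2 = 1 := by
  rw [pow_two]; ext x; exact (invAut α).symm_apply_apply x

/-- The action of `ℤ/2` on the free group `Fₙ`, the generator acting by the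
inverting involution `ι`. -/
def iotaAction (n : ℕ) : Multiplicative (ZMod 2) →* MulAut (FreeGroup (Fin n)) where
  toFun x := invAut (Fin n) ^ (x.toAdd.val)
  map_one' := by simp
  map_mul' a b := by
    show invAut (Fin n) ^ ((a.toAdd + b.toAdd).val) = _
    rw [ZMod.val_add, ← pow_eq_pow_mod _ (invAut_sq (Fin n)), pow_add]


open SemidirectProduct Monoid Multiplicative

lemma zmod2_hom_ext {M : Type*} [Monoid M] {f g : Multiplicative (ZMod 2) →* M}
    (h : f (ofAdd 1) = g (ofAdd 1)) : f = g := by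
  have key : ∀ x : Multiplicative (ZMod 2), x = (ofAdd (1 : ZMod 2)) ^ x.toAdd.val := by decide
  refine MonoidHom.ext fun x => ?_
  rw [key x, map_pow, map_pow, h]

def homOfSq {G : Type*} [Monoid G] (g : G) (hg : g ^ 2 = 1) :
    Multiplicative (ZMod 2) →* G where
  toFun x := g ^ x.toAdd.val
  map_one' := by simp
  map_mul' a b := by
    show g ^ ((a.toAdd + b.toAdd).val) = _
    rw [ZMod.val_add, ← pow_eq_pow_mod _ hg, pow_add]

lemma homOfSq_gen {G : Type*} [Monoid G] (g : G) (hg : g ^ 2 = 1) :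
    homOfSq g hg (ofAdd 1) = g := by
  show g ^ ((ofAdd (1:ZMod 2)).toAdd.val) = g
  rw [toAdd_ofAdd, show (1:ZMod 2).val = 1 from rfl, pow_one]

section Main
variable (n : ℕ)

/-- Generator of the `i`-th factor in the free product. -/
def T (i : Fin (n + 1)) : Monoid.CoprodI (fun _ : Fin (n + 1) => Multiplicative (ZMod 2)) :=
  Monoid.CoprodI.of (i := i) (ofAdd 1)

lemma T_sq (i : Fin (n + 1)) : T n i * T n i = 1 := by
  rw [T, ← map_mul, ← ofAdd_add, show (1 + 1 : ZMod 2) = 0 by decide, ofAdd_zero, map_one]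

lemma T_inv (i : Fin (n + 1)) : (T n i)⁻¹ = T n i :=
  inv_eq_of_mul_eq_one_right (T_sq n i)

lemma iota_gen (j : Fin n) :
    (iotaAction n (ofAdd 1)) (FreeGroup.of j) = (FreeGroup.of j)⁻¹ := by
  show ((invAut (Fin n)) ^ ((toAdd (ofAdd (1:ZMod 2))).val)) (FreeGroup.of j) = _
  rw [toAdd_ofAdd, show (1:ZMod 2).val = 1 from rfl, pow_one]
  simp [invAut]

/-- Map on the free group part. -/
def phiF : FreeGroup (Fin n) →* Monoid.CoprodI (fun _ : Fin (n + 1) => Multiplicative (ZMod 2)) :=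
  FreeGroup.lift fun j => T n j.castSucc * T n (Fin.last n)

def fwd : (FreeGroup (Fin n)) ⋊[iotaAction n] (Multiplicative (ZMod 2)) →*
    Monoid.CoprodI (fun _ : Fin (n + 1) => Multiplicative (ZMod 2)) :=
  SemidirectProduct.lift (phiF n)
    (Monoid.CoprodI.of (M := fun _ : Fin (n+1) => Multiplicative (ZMod 2)) (i := Fin.last n)) (by
    have h2 : ∀ g : Multiplicative (ZMod 2), g = 1 ∨ g = ofAdd 1 := by decide
    intro g
    rcases h2 g with rfl | rfl
    · ext j <;> simp
    · ext j
      simp only [MonoidHom.comp_apply, MulEquiv.coe_toMonoidHom, iota_gen, map_inv,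
        MulAut.conj_apply]
      rw [phiF, FreeGroup.lift_apply_of, mul_inv_rev, T_inv, T_inv]
      show _ = T n (Fin.last n) * (T n j.castSucc * T n (Fin.last n)) * (T n (Fin.last n))⁻¹
      rw [T_inv, mul_assoc, mul_assoc, T_sq, mul_one])

lemma sdp_gen_sq (j : Fin n) :
    (SemidirectProduct.inl (FreeGroup.of j) * SemidirectProduct.inr (φ := iotaAction n)
      (ofAdd 1)) ^ 2 = 1 := by
  rw [pow_two]
  have key : SemidirectProduct.inr (φ := iotaAction n) (ofAdd 1) *
      SemidirectProduct.inl (FreeGroup.of j) =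
      SemidirectProduct.inl ((FreeGroup.of j)⁻¹) *
        SemidirectProduct.inr (φ := iotaAction n) (ofAdd 1) := by
    rw [← iota_gen n j, SemidirectProduct.inl_aut]
    simp [mul_assoc]
  calc SemidirectProduct.inl (FreeGroup.of j) *
        SemidirectProduct.inr (φ := iotaAction n) (ofAdd 1) *
        (SemidirectProduct.inl (FreeGroup.of j) *
          SemidirectProduct.inr (φ := iotaAction n) (ofAdd 1))
      = SemidirectProduct.inl (FreeGroup.of j) *
        (SemidirectProduct.inr (φ := iotaAction n) (ofAdd 1) *
          SemidirectProduct.inl (FreeGroup.of j)) *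
        SemidirectProduct.inr (φ := iotaAction n) (ofAdd 1) := by group
    _ = 1 := by
        rw [key, ← mul_assoc, ← map_mul, mul_inv_cancel, map_one, one_mul,
          ← map_mul, ← ofAdd_add, show (1 + 1 : ZMod 2) = 0 by decide, ofAdd_zero, map_one]

def bwd : Monoid.CoprodI (fun _ : Fin (n + 1) => Multiplicative (ZMod 2)) →*
    (FreeGroup (Fin n)) ⋊[iotaAction n] (Multiplicative (ZMod 2)) :=
  Monoid.CoprodI.lift fun i =>
    Fin.lastCases SemidirectProduct.inr
      (fun j => homOfSq _ (sdp_gen_sq n j)) i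

lemma bwd_T_last : bwd n (T n (Fin.last n)) = SemidirectProduct.inr (ofAdd 1) := by
  rw [T, bwd, Monoid.CoprodI.lift_of, Fin.lastCases_last]

lemma bwd_T_castSucc (j : Fin n) : bwd n (T n j.castSucc) =
    SemidirectProduct.inl (FreeGroup.of j) *
      SemidirectProduct.inr (φ := iotaAction n) (ofAdd 1) := by
  rw [T, bwd, Monoid.CoprodI.lift_of, Fin.lastCases_castSucc, homOfSq_gen]


def theEquiv : (FreeGroup (Fin n)) ⋊[iotaAction n] (Multiplicative (ZMod 2)) ≃*
    Monoid.CoprodI (fun _ : Fin (n + 1) => Multiplicative (ZMod 2)) :=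
  MonoidHom.toMulEquiv (fwd n) (bwd n)
    (by
      apply SemidirectProduct.hom_ext
      · apply FreeGroup.ext_hom
        intro j
        simp only [MonoidHom.comp_apply, MonoidHom.id_apply]
        rw [fwd, SemidirectProduct.lift_inl, phiF, FreeGroup.lift_apply_of, map_mul,
          bwd_T_castSucc, bwd_T_last, mul_assoc, ← map_mul, ← ofAdd_add,
          show (1 + 1 : ZMod 2) = 0 by decide, ofAdd_zero, map_one, mul_one]
      · apply zmod2_hom_ext
        simp only [MonoidHom.comp_apply, MonoidHom.id_apply]
        rw [fwd, SemidirectProduct.lift_inr]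
        exact bwd_T_last n)
    (by
      apply Monoid.CoprodI.ext_hom
      intro i
      apply zmod2_hom_ext
      simp only [MonoidHom.comp_apply, MonoidHom.id_apply]
      induction i using Fin.lastCases with
      | last =>
        show fwd n (bwd n (T n (Fin.last n))) = T n (Fin.last n)
        rw [bwd_T_last, fwd, SemidirectProduct.lift_inr]
        rfl
      | cast j =>
        show fwd n (bwd n (T n j.castSucc)) = T n j.castSucc
        rw [bwd_T_castSucc, map_mul, fwd, SemidirectProduct.lift_inl,
          SemidirectProduct.lift_inr, phiF, FreeGroup.lift_apply_of, mul_assoc]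
        show _ * (T n (Fin.last n) * T n (Fin.last n)) = _
        rw [T_sq, mul_one])

end Main

theorem semidirect_iso_free_product_of_involutions (n : ℕ) :
    Nonempty
      (SemidirectProduct (FreeGroup (Fin n)) (Multiplicative (ZMod 2)) (iotaAction n) ≃*
        Monoid.CoprodI (fun _ : Fin (n + 1) => Multiplicative (ZMod 2))) :=
  ⟨theEquiv n⟩
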